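/- Let M be a ℤ-module, ι : M → M ⊗_ℚ the natural map, A a sub-semigroup of M, and f : A → ℝ a function such that there is a positive real e with f(n·a) = n^e·f(a) for all positive integers n and all a ∈ A. Then there exists a unique function f̃ : Cone_ℚ(ι(A)) → ℝ with f̃ ∘ ι = f on A, and f̃(λ·x) = λ^e·f̃(x) for all positive rationals λ and all x ∈ Cone_ℚ(ι(A)). -/

import Mathlib

open TensorProduct

/-- The cone generated by `S`: positive linear combinations of elements of `S`. -/
def coneGen (K : Type*) [Field K] [LinearOrder K] [IsStrictOrderedRing K] {V : Type*} [AddCommGroup V]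
    [Module K V] (S : Set V) : Set V :=
  { v | ∃ (n : ℕ) (a : Fin (n + 1) → V) (l : Fin (n + 1) → K),
      (∀ i, a i ∈ S) ∧ (∀ i, 0 < l i) ∧ v = ∑ i, l i • a i }

section Aux
variable {M : Type*} [AddCommGroup M]

lemma aux_nat_smul_tmul (m : ℕ) (b : M) :
    ((m : ℚ)) • ((1:ℚ) ⊗ₜ[ℤ] b) = (1:ℚ) ⊗ₜ[ℤ] (m • b) := by
  rw [← Nat.cast_smul_eq_nsmul ℤ m b, tmul_smul, ← Int.cast_smul_eq_zsmul ℚ]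
  norm_num

/-- torsion detection: equal images under ι give equal scalings. -/
lemma aux_torsion {a b : M} (h : (1:ℚ) ⊗ₜ[ℤ] a = (1:ℚ) ⊗ₜ[ℤ] b) :
    ∃ k : ℕ, 0 < k ∧ k • a = k • b := by
  have inst : IsLocalizedModule (nonZeroDivisors ℤ) (TensorProduct.mk ℤ ℚ M 1) :=
    (isLocalizedModule_iff_isBaseChange (nonZeroDivisors ℤ) ℚ _).mpr
      (TensorProduct.isBaseChange ℤ M ℚ)
  obtain ⟨c, hc⟩ := (IsLocalizedModule.eq_iff_exists (nonZeroDivisors ℤ)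
    (TensorProduct.mk ℤ ℚ M 1)).mp h
  have hc0 : (c : ℤ) ≠ 0 := nonZeroDivisors.coe_ne_zero c
  refine ⟨(c : ℤ).natAbs, Int.natAbs_pos.mpr hc0, ?_⟩
  have hc' : (c : ℤ) • a = (c : ℤ) • b := hc
  rcases Int.natAbs_eq (c : ℤ) with h1 | h1
  · rw [← Nat.cast_smul_eq_nsmul ℤ, ← Nat.cast_smul_eq_nsmul ℤ, ← h1, hc']
  · rw [← Nat.cast_smul_eq_nsmul ℤ, ← Nat.cast_smul_eq_nsmul ℤ,
      show ((c : ℤ).natAbs : ℤ) = -(c : ℤ) by omega, neg_smul, neg_smul, hc']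

variable {A : Set M} (hA : ∀ x ∈ A, ∀ y ∈ A, x + y ∈ A)

include hA in
lemma aux_nsmul_mem {a : M} (ha : a ∈ A) : ∀ n : ℕ, 0 < n → n • a ∈ A := by
  intro n hn
  induction n with
  | zero => omega
  | succ m ih =>
    rcases Nat.eq_zero_or_pos m with h | h
    · simpa [h] using ha
    · rw [succ_nsmul]
      exact hA _ (ih h) _ ha

include hA in
/-- single positive rational multiple of ι a has the canonical form -/
lemma aux_single (l : ℚ) (hl : 0 < l) {a : M} (ha : a ∈ A) :
    ∃ (q : ℕ) (d : M), d ∈ A ∧ 0 < q ∧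
      l • ((1:ℚ) ⊗ₜ[ℤ] a) = ((q : ℚ))⁻¹ • ((1:ℚ) ⊗ₜ[ℤ] d) := by
  have hnum : 0 < l.num := Rat.num_pos.mpr hl
  refine ⟨l.den, l.num.toNat • a,
    aux_nsmul_mem hA ha _ (by omega), l.pos, ?_⟩
  rw [← aux_nat_smul_tmul, smul_smul]
  congr 1
  have h1 : ((l.num.toNat : ℚ)) = ((l.num : ℚ)) := by
    exact_mod_cast Int.toNat_of_nonneg hnum.le
  rw [h1, mul_comm, ← div_eq_mul_inv, Rat.num_div_den]

include hA in
/-- combination of two canonical forms -/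
lemma aux_add {q k : ℕ} {d c : M} (hd : d ∈ A) (hc : c ∈ A) (hq : 0 < q) (hk : 0 < k) :
    ((q : ℚ))⁻¹ • ((1:ℚ) ⊗ₜ[ℤ] d) + ((k : ℚ))⁻¹ • ((1:ℚ) ⊗ₜ[ℤ] c)
      = (((q * k : ℕ) : ℚ))⁻¹ • ((1:ℚ) ⊗ₜ[ℤ] (k • d + q • c)) := by
  have hq' : ((q:ℚ)) ≠ 0 := by exact_mod_cast hq.ne'
  have hk' : ((k:ℚ)) ≠ 0 := by exact_mod_cast hk.ne'
  rw [tmul_add, ← aux_nat_smul_tmul, ← aux_nat_smul_tmul, smul_add,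
    smul_smul, smul_smul]
  push_cast
  rw [mul_inv]
  congr 2
  · field_simp
  · field_simp [mul_comm]

include hA in
/-- Every element of the cone has canonical form (1/q) ι d. -/
lemma aux_cone_form {x : ℚ ⊗[ℤ] M}
    (hx : x ∈ coneGen ℚ ((fun y : M => ((1 : ℚ) ⊗ₜ[ℤ] y : ℚ ⊗[ℤ] M)) '' A)) :
    ∃ (q : ℕ) (d : M), d ∈ A ∧ 0 < q ∧ x = ((q : ℚ))⁻¹ • ((1:ℚ) ⊗ₜ[ℤ] d) := by
  obtain ⟨n, av, lv, hav, hlv, rfl⟩ := hx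
  induction n with
  | zero =>
    obtain ⟨b, hb, hab⟩ := hav 0
    obtain ⟨q, d, hd, hq, h⟩ := aux_single hA (lv 0) (hlv 0) hb
    exact ⟨q, d, hd, hq, by rw [Fin.sum_univ_one, ← hab, h]⟩
  | succ m ih =>
    obtain ⟨k, c, hcA, hk, hsum⟩ := ih (fun i => av i.succ) (fun i => lv i.succ)
      (fun i => hav i.succ) (fun i => hlv i.succ)
    obtain ⟨b, hb, hab⟩ := hav 0
    obtain ⟨q, d, hd, hq, h⟩ := aux_single hA (lv 0) (hlv 0) hb
    refine ⟨q * k, k • d + q • c, hA _ (aux_nsmul_mem hA hd _ hk) _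
      (aux_nsmul_mem hA hcA _ hq), Nat.mul_pos hq hk, ?_⟩
    rw [Fin.sum_univ_succ, hsum, ← hab, h, aux_add hA hd hcA hq hk]

include hA in
lemma aux_mem_cone {a : M} (ha : a ∈ A) :
    (1:ℚ) ⊗ₜ[ℤ] a ∈ coneGen ℚ ((fun y : M => ((1 : ℚ) ⊗ₜ[ℤ] y : ℚ ⊗[ℤ] M)) '' A) :=
  ⟨0, fun _ => (1:ℚ) ⊗ₜ[ℤ] a, fun _ => 1, fun _ => ⟨a, ha, rfl⟩, fun _ => one_pos,
    by simp⟩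

end Aux

theorem homogeneous_extension_to_coneGen (M : Type*) [AddCommGroup M] (A : Set M)
    (hA : ∀ x ∈ A, ∀ y ∈ A, x + y ∈ A) (f : M → ℝ) (e : ℝ) (he : 0 < e)
    (hf : ∀ a ∈ A, ∀ n : ℕ, 0 < n → f (n • a) = (n : ℝ) ^ e * f a) :
    ∃ g : ℚ ⊗[ℤ] M → ℝ,
      ((∀ a ∈ A, g ((1 : ℚ) ⊗ₜ[ℤ] a) = f a) ∧
        (∀ l : ℚ, 0 < l →
          ∀ x ∈ coneGen ℚ ((fun y : M => ((1 : ℚ) ⊗ₜ[ℤ] y : ℚ ⊗[ℤ] M)) '' A),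
            g (l • x) = (l : ℝ) ^ e * g x)) ∧
      ∀ g' : ℚ ⊗[ℤ] M → ℝ,
        ((∀ a ∈ A, g' ((1 : ℚ) ⊗ₜ[ℤ] a) = f a) ∧
          (∀ l : ℚ, 0 < l →
            ∀ x ∈ coneGen ℚ ((fun y : M => ((1 : ℚ) ⊗ₜ[ℤ] y : ℚ ⊗[ℤ] M)) '' A),
              g' (l • x) = (l : ℝ) ^ e * g' x)) →
        ∀ x ∈ coneGen ℚ ((fun y : M => ((1 : ℚ) ⊗ₜ[ℤ] y : ℚ ⊗[ℤ] M)) '' A), g' x = g x := by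
  classical
  -- well-definedness of the candidate value
  have key : ∀ (n m : ℕ), 0 < n → 0 < m → ∀ a ∈ A, ∀ b ∈ A,
      ((n:ℚ))⁻¹ • ((1:ℚ) ⊗ₜ[ℤ] a) = ((m:ℚ))⁻¹ • ((1:ℚ) ⊗ₜ[ℤ] b) →
      ((n:ℝ))⁻¹ ^ e * f a = ((m:ℝ))⁻¹ ^ e * f b := by
    intro n m hn hm a ha b hb hx
    have hnQ : ((n:ℚ)) ≠ 0 := by exact_mod_cast hn.ne'
    have hmQ : ((m:ℚ)) ≠ 0 := by exact_mod_cast hm.ne'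
    have h1 : (1:ℚ) ⊗ₜ[ℤ] (m • a) = (1:ℚ) ⊗ₜ[ℤ] (n • b) := by
      rw [← aux_nat_smul_tmul, ← aux_nat_smul_tmul]
      have h := congrArg (fun z : ℚ ⊗[ℤ] M => (((n : ℚ)) * ((m : ℚ))) • z) hx
      simp only [smul_smul] at h
      rw [show ((n:ℚ)) * (m:ℚ) * ((n:ℚ))⁻¹ = (m:ℚ) by field_simp,
        show ((n:ℚ)) * (m:ℚ) * ((m:ℚ))⁻¹ = (n:ℚ) by field_simp] at h
      exact h
    obtain ⟨k, hk, hkab⟩ := aux_torsion h1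
    have h2 : f ((k * m) • a) = f ((k * n) • b) := by
      rw [mul_smul, mul_smul, hkab]
    rw [hf a ha (k*m) (by positivity), hf b hb (k*n) (by positivity)] at h2
    have hkR : (0:ℝ) < (k:ℝ) := by exact_mod_cast hk
    have hnR : (0:ℝ) < (n:ℝ) := by exact_mod_cast hn
    have hmR : (0:ℝ) < (m:ℝ) := by exact_mod_cast hm
    have h3 : (k:ℝ) ^ e * ((m:ℝ) ^ e * f a) = (k:ℝ) ^ e * ((n:ℝ) ^ e * f b) := by
      push_cast at h2
      rw [Real.mul_rpow hkR.le hmR.le, Real.mul_rpow hkR.le hnR.le] at h2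
      linarith [h2]
    have h4 : (m:ℝ) ^ e * f a = (n:ℝ) ^ e * f b :=
      mul_left_cancel₀ (ne_of_gt (Real.rpow_pos_of_pos hkR e)) h3
    rw [Real.inv_rpow hnR.le, Real.inv_rpow hmR.le]
    have hne : (0:ℝ) < (n:ℝ) ^ e := Real.rpow_pos_of_pos hnR e
    have hme : (0:ℝ) < (m:ℝ) ^ e := Real.rpow_pos_of_pos hmR e
    field_simp
    linarith [h4]
  set P : ℚ ⊗[ℤ] M → Prop := fun x =>
    ∃ p : ℕ × M, p.2 ∈ A ∧ 0 < p.1 ∧ x = ((p.1 : ℚ))⁻¹ • ((1:ℚ) ⊗ₜ[ℤ] p.2) with hP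
  set g : ℚ ⊗[ℤ] M → ℝ := fun x =>
    if h : P x then (((h.choose.1 : ℝ))⁻¹) ^ e * f h.choose.2 else 0 with hg
  have g_eq : ∀ (n : ℕ) (a : M), a ∈ A → 0 < n →
      g (((n:ℚ))⁻¹ • ((1:ℚ) ⊗ₜ[ℤ] a)) = ((n:ℝ))⁻¹ ^ e * f a := by
    intro n a ha hn
    have h : P (((n:ℚ))⁻¹ • ((1:ℚ) ⊗ₜ[ℤ] a)) := ⟨(n, a), ha, hn, rfl⟩
    rw [hg]
    simp only [dif_pos h]
    obtain ⟨h1, h2, h3⟩ := h.choose_spec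
    exact key _ _ h2 hn _ h1 _ ha h3.symm
  have g_tmul : ∀ a ∈ A, g ((1:ℚ) ⊗ₜ[ℤ] a) = f a := by
    intro a ha
    have := g_eq 1 a ha one_pos
    simpa [Real.one_rpow] using this
  refine ⟨g, ⟨g_tmul, ?_⟩, ?_⟩
  · -- homogeneity
    intro l hl x hx
    obtain ⟨n, a, ha, hn, rfl⟩ := aux_cone_form hA hx
    set r : ℚ := l * ((n:ℚ))⁻¹ with hr
    have hnQ : (0:ℚ) < (n:ℚ) := by exact_mod_cast hn
    have hrpos : 0 < r := by positivity
    have hnum : 0 < r.num := Rat.num_pos.mpr hrpos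
    have hform : l • (((n:ℚ))⁻¹ • ((1:ℚ) ⊗ₜ[ℤ] a))
        = ((r.den : ℚ))⁻¹ • ((1:ℚ) ⊗ₜ[ℤ] (r.num.toNat • a)) := by
      rw [smul_smul, ← hr, ← aux_nat_smul_tmul, smul_smul]
      congr 1
      have h1 : ((r.num.toNat : ℚ)) = ((r.num : ℚ)) := by
        exact_mod_cast Int.toNat_of_nonneg hnum.le
      rw [h1, mul_comm, ← div_eq_mul_inv, Rat.num_div_den]
    rw [hform, g_eq _ _ (aux_nsmul_mem hA ha _ (by omega)) r.pos,
      g_eq _ _ ha hn, hf a ha r.num.toNat (by omega)]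
    have hdenR : (0:ℝ) < (r.den : ℝ) := by exact_mod_cast r.pos
    have hnumR : (0:ℝ) < (r.num.toNat : ℝ) := by exact_mod_cast Int.toNat_of_nonneg hnum.le ▸ (by exact_mod_cast hnum : (0:ℚ) < (r.num:ℚ))
    have hnR : (0:ℝ) < (n:ℝ) := by exact_mod_cast hn
    have hlR : (0:ℝ) < (l:ℝ) := by exact_mod_cast hl
    have hratio : ((r.num.toNat : ℝ)) * ((r.den : ℝ))⁻¹ = (l:ℝ) * ((n:ℝ))⁻¹ := by
      have h1 : ((r.num.toNat : ℚ)) = ((r.num : ℚ)) := by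
        exact_mod_cast Int.toNat_of_nonneg hnum.le
      have h2 : ((r.num.toNat : ℚ)) * ((r.den : ℚ))⁻¹ = l * ((n:ℚ))⁻¹ := by
        rw [h1, ← div_eq_mul_inv, Rat.num_div_den r, hr]
      have h3 := congrArg (fun q : ℚ => (q : ℝ)) h2
      push_cast at h3
      exact h3
    calc ((r.den:ℝ))⁻¹ ^ e * ((r.num.toNat : ℝ) ^ e * f a)
        = (((r.num.toNat : ℝ)) * ((r.den:ℝ))⁻¹) ^ e * f a := by
          rw [Real.mul_rpow hnumR.le (by positivity)]; ring
      _ = ((l:ℝ) * ((n:ℝ))⁻¹) ^ e * f a := by rw [hratio]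
      _ = (l:ℝ) ^ e * (((n:ℝ))⁻¹ ^ e * f a) := by
          rw [Real.mul_rpow hlR.le (by positivity)]; ring
  · -- uniqueness
    rintro g' ⟨hg1', hg2'⟩ x hx
    obtain ⟨n, a, ha, hn, rfl⟩ := aux_cone_form hA hx
    have hnQ : (0:ℚ) < ((n:ℚ))⁻¹ := by positivity
    have := hg2' ((n:ℚ))⁻¹ hnQ _ (aux_mem_cone hA ha)
    rw [this, hg1' a ha, g_eq n a ha hn, Rat.cast_inv, Rat.cast_natCast]
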